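/- Let ρ : ℍ → M₂(ℂ) be the embedding ρ(a + b·i + c·j + d·k) = [[a + b·i, c + d·i], [−c + d·i, a − b·i]], and regard the space ℂ² of complex column vectors as a left ℍ-module via v ↦ ρ(q)·v. Then the ℝ-bilinear map sending (v, c) with v = (a, b) ∈ ℂ² and c ∈ ℂ to the matrix [[a·c, −b̄·c], [b·c, ā·c]] induces a bijective ℂ-linear map φ : ℂ² ⊗_ℝ ℂ → M₂(ℂ) (ℂ acting on the right tensor factor) which satisfies φ((ρ(q)·v) ⊗ c) = ρ(q)·φ(v ⊗ c) for all q ∈ ℍ, v ∈ ℂ², c ∈ ℂ, and φ((d·v) ⊗ c) = φ(v ⊗ c)·[[d, 0], [0, d̄]] for all d ∈ ℂ. -/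
import Mathlib


open Quaternion Matrix TensorProduct

/-- The matrix `ρ(a + b i + c j + d k) = [[a + b i, c + d i],[−c + d i, a − b i]]`
representing a quaternion, via which `ℂ²` (column vectors) is a left `ℍ`-module. -/
def quatMat (q : ℍ[ℝ]) : Matrix (Fin 2) (Fin 2) ℂ :=
  !![(⟨q.re, q.imI⟩ : ℂ), (⟨q.imJ, q.imK⟩ : ℂ);
     (⟨-q.imJ, q.imK⟩ : ℂ), (⟨q.re, -q.imI⟩ : ℂ)]

noncomputable def gmap : (Fin 2 → ℂ) →ₗ[ℝ] Matrix (Fin 2) (Fin 2) ℂ where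
  toFun v := !![v 0, -(star (v 1)); v 1, star (v 0)]
  map_add' x y := by
    ext i j; fin_cases i <;> fin_cases j <;>
      simp [star_add] <;> ring
  map_smul' r v := by
    ext i j; fin_cases i <;> fin_cases j <;>
      simp [Pi.smul_apply, Complex.real_smul, Complex.star_def, _root_.map_mul] <;> ring

noncomputable def Bmap : ℂ →ₗ[ℂ] ((Fin 2 → ℂ) →ₗ[ℝ] Matrix (Fin 2) (Fin 2) ℂ) where
  toFun c := c • gmap
  map_add' x y := add_smul x y gmap
  map_smul' r c := by simp [smul_smul]

noncomputable def phi : (ℂ ⊗[ℝ] (Fin 2 → ℂ)) →ₗ[ℂ] Matrix (Fin 2) (Fin 2) ℂ :=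
  TensorProduct.AlgebraTensorModule.lift Bmap

theorem phi_tmul (c : ℂ) (v : Fin 2 → ℂ) :
    phi (c ⊗ₜ v) = !![v 0 * c, -(star (v 1)) * c; v 1 * c, star (v 0) * c] := by
  show c • (gmap v) = _
  ext i j; fin_cases i <;> fin_cases j <;> simp [gmap] <;> ring

/-- The `ℝ`-bilinear map sending `(v, c)` with `v = (a, b) ∈ ℂ²` (column vector) and
`c ∈ ℂ` to `[[a·c, −b̄·c],[b·c, ā·c]]` induces a bijective `ℂ`-linear map
`φ : ℂ² ⊗_ℝ ℂ → M₂(ℂ)` (with `ℂ` acting on the tensor factor carrying `c`, written on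
the left in Mathlib) satisfying `φ((ρ(q)·v) ⊗ c) = ρ(q)·φ(v ⊗ c)` and
`φ((d·v) ⊗ c) = φ(v ⊗ c)·[[d, 0],[0, d̄]]`. -/
theorem columnVectors_complexification :
    ∃ φ : (ℂ ⊗[ℝ] (Fin 2 → ℂ)) →ₗ[ℂ] Matrix (Fin 2) (Fin 2) ℂ,
      (∀ (c : ℂ) (v : Fin 2 → ℂ),
        φ (c ⊗ₜ v) = !![v 0 * c, -(star (v 1)) * c; v 1 * c, star (v 0) * c]) ∧
      Function.Bijective φ ∧
      (∀ (q : ℍ[ℝ]) (c : ℂ) (v : Fin 2 → ℂ),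
        φ (c ⊗ₜ (quatMat q).mulVec v) = quatMat q * φ (c ⊗ₜ v)) ∧
      (∀ (d c : ℂ) (v : Fin 2 → ℂ),
        φ (c ⊗ₜ (d • v)) = φ (c ⊗ₜ v) * !![d, 0; 0, star d]) := by
  refine ⟨phi, phi_tmul, ?_, ?_, ?_⟩
  · show Function.Bijective phi

    have hsurj : Function.Surjective phi := by
      intro M
      refine ⟨((M 0 0 + M 1 1)/2) ⊗ₜ ![1,0] + ((M 1 1 - M 0 0)/2 * Complex.I) ⊗ₜ ![Complex.I,0]
        + ((M 1 0 - M 0 1)/2) ⊗ₜ ![0,1] + (-((M 0 1 + M 1 0)/2) * Complex.I) ⊗ₜ ![0,Complex.I], ?_⟩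
      rw [map_add, map_add, map_add, phi_tmul, phi_tmul, phi_tmul, phi_tmul]
      ext i j; fin_cases i <;> fin_cases j <;>
        · simp [Complex.ext_iff]
          ring_nf
          simp [Complex.I_sq]
          try ring_nf
    have hdim : Module.finrank ℂ (ℂ ⊗[ℝ] (Fin 2 → ℂ)) = Module.finrank ℂ (Matrix (Fin 2) (Fin 2) ℂ) := by
      rw [Module.finrank_baseChange]
      simp [Module.finrank_matrix, Module.finrank_pi_fintype, Complex.finrank_real_complex]
    exact ⟨(LinearMap.injective_iff_surjective_of_finrank_eq_finrank hdim).mpr hsurj, hsurj⟩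
  · intro q c v

    rw [phi_tmul, phi_tmul]
    ext i j; fin_cases i <;> fin_cases j <;>
      · simp [quatMat, Matrix.mul_apply, Matrix.mulVec, dotProduct, Fin.sum_univ_two,
          Complex.ext_iff]
        ring_nf
        try simp
  · intro d c v

    rw [phi_tmul, phi_tmul]
    ext i j; fin_cases i <;> fin_cases j <;>
      · simp [Matrix.mul_apply, Fin.sum_univ_two, Complex.ext_iff]
        ring_nf
        try simp
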